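/- Let G be a graph of order at least 2 and x a vertex with γ_R(G − x) > γ_R(G). Set p = γ_R(G − x) − γ_R(G). Then for every set S of edges incident to x with |S| ≥ d(x) − p, we have γ_R(G − S) > γ_R(G). -/

import Mathlib

/-- A Roman dominating function on `G`: labels in `{0,1,2}` and every vertex
labeled `0` has a neighbor labeled `2`. -/
def IsRDF {V : Type*} (G : SimpleGraph V) (f : V → ℕ) : Prop :=
  (∀ v, f v ≤ 2) ∧ ∀ v, f v = 0 → ∃ u, G.Adj v u ∧ f u = 2

/-- The Roman domination number of `G`. -/
noncomputable def romanDom {V : Type*} [Fintype V] (G : SimpleGraph V) : ℕ :=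
  sInf {w | ∃ f, IsRDF G f ∧ ∑ v, f v = w}

/-- The Roman domination number of the vertex-deleted graph `G - v`. -/
noncomputable def romanDomDel {V : Type*} [Fintype V] [DecidableEq V]
    (G : SimpleGraph V) (v : V) : ℕ :=
  romanDom (G.induce {w | w ≠ v})

/-- The Roman bondage number of `G`. -/
noncomputable def romanBondage {V : Type*} [Fintype V] [DecidableEq V]
    (G : SimpleGraph V) : ℕ :=
  sInf {k | ∃ B : Finset (Sym2 V), ↑B ⊆ G.edgeSet ∧ B.card = k ∧
    romanDom (G.deleteEdges ↑B) ≠ romanDom G}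


lemma isRDF_const2 {V : Type*} (G : SimpleGraph V) : IsRDF G (fun _ => 2) :=
  ⟨fun _ => le_refl 2, fun _ h => by simp at h⟩

lemma romanDom_le {V : Type*} [Fintype V] (G : SimpleGraph V) {f : V → ℕ}
    (hf : IsRDF G f) : romanDom G ≤ ∑ v, f v :=
  Nat.sInf_le ⟨f, hf, rfl⟩

lemma romanDom_spec {V : Type*} [Fintype V] (G : SimpleGraph V) :
    ∃ f, IsRDF G f ∧ ∑ v, f v = romanDom G :=
  Nat.sInf_mem (⟨∑ v : V, (2:ℕ), ⟨fun _ => 2, isRDF_const2 G, rfl⟩⟩ :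
    Set.Nonempty {w | ∃ f, IsRDF G f ∧ ∑ v, f v = w})

/-- If `γ_R(G − x) > γ_R(G)` and `p = γ_R(G − x) − γ_R(G)`, then
for every set `S` of edges incident to `x` with `|S| ≥ d(x) − p`,
`γ_R(G − S) > γ_R(G)`. -/
theorem stmt9 {V : Type*} [Fintype V] [DecidableEq V] (G : SimpleGraph V)
    [DecidableRel G.Adj] (hn : 2 ≤ Fintype.card V) (x : V)
    (hx : romanDom G < romanDomDel G x)
    (S : Finset (Sym2 V)) (hS : ↑S ⊆ G.edgeSet) (hinc : ∀ e ∈ S, x ∈ e)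
    (hcard : G.degree x - (romanDomDel G x - romanDom G) ≤ S.card) :
    romanDom G < romanDom (G.deleteEdges ↑S) := by
  by_contra hcon
  push_neg at hcon
  haveI : DecidableRel (G.deleteEdges ↑S).Adj := fun a b =>
    decidable_of_iff (G.Adj a b ∧ s(a,b) ∉ S) (by simp [SimpleGraph.deleteEdges_adj])
  obtain ⟨f, hf, hw⟩ := romanDom_spec (G.deleteEdges ↑S)
  set R := romanDom G with hR
  set D := romanDomDel G x with hD
  have hwR : ∑ v, f v ≤ R := hw ▸ hcon
  have hfle := hf.1
  have hfdom := hf.2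
  have hsub : ∀ g : V → ℕ, ∑ v : {w : V | w ≠ x}, g v = ∑ v ∈ Finset.univ.erase x, g v := by
    intro g
    refine (Finset.sum_subtype _ ?_ g).symm
    intro a
    simp [Set.mem_setOf_eq]
  have herase : ∑ v ∈ Finset.univ.erase x, f v + f x = ∑ v, f v :=
    Finset.sum_erase_add _ _ (Finset.mem_univ x)
  by_cases hfx : f x = 2
  · -- case f x = 2
    set g0 : V → ℕ :=
      fun v => if f v = 0 ∧ (G.deleteEdges ↑S).Adj x v then 1 else f v with hg0
    have hgRDF : IsRDF (G.induce {w | w ≠ x}) (fun v => g0 v) := by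
      constructor
      · intro v
        show (if f (v:V) = 0 ∧ (G.deleteEdges ↑S).Adj x v then 1 else f (v:V)) ≤ 2
        split_ifs with h
        · omega
        · exact hfle _
      · intro v hv
        have hv' : (if f (v:V) = 0 ∧ (G.deleteEdges ↑S).Adj x v then 1 else f (v:V)) = 0 := hv
        by_cases h : f (v:V) = 0 ∧ (G.deleteEdges ↑S).Adj x (v:V)
        · rw [if_pos h] at hv'
          exact absurd hv' one_ne_zero
        · rw [if_neg h] at hv'
          obtain ⟨u, hu, hu2⟩ := hfdom (v : V) hv'
          have hux : u ≠ x := by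
            rintro rfl
            exact h ⟨hv', hu.symm⟩
          refine ⟨⟨u, hux⟩, hu.1, ?_⟩
          have hnot : ¬ (f u = 0 ∧ (G.deleteEdges ↑S).Adj x u) := by
            rintro ⟨h0, -⟩
            omega
          show (if f u = 0 ∧ (G.deleteEdges ↑S).Adj x u then 1 else f u) = 2
          rw [if_neg hnot]
          exact hu2
    set N := Finset.univ.filter (fun v => (G.deleteEdges ↑S).Adj x v) with hN
    have hND : N.card ≤ D - R := by
      set T := Finset.univ.filter (fun y => G.Adj x y ∧ s(x,y) ∈ S) with hT
      have hST : S.card ≤ T.card := by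
        apply Finset.card_le_card_of_injOn
          (fun e => if h : x ∈ e then Sym2.Mem.other h else x)
        · intro e he
          have hxe : x ∈ e := hinc e he
          have hee : s(x, Sym2.Mem.other hxe) = e := Sym2.other_spec hxe
          have hadj : G.Adj x (Sym2.Mem.other hxe) := by
            rw [← SimpleGraph.mem_edgeSet, hee]
            exact hS he
          simp only [Finset.mem_coe, hT, Finset.mem_filter, Finset.mem_univ, true_and, dif_pos hxe]
          exact ⟨hadj, by rw [hee]; exact he⟩
        · intro e he e' he' heq
          have hxe : x ∈ e := hinc e he
          have hxe' : x ∈ e' := hinc e' he'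
          simp only [dif_pos hxe, dif_pos hxe'] at heq
          rw [← Sym2.other_spec hxe, ← Sym2.other_spec hxe', heq]
      have hdisj : Disjoint N T := by
        rw [Finset.disjoint_left]
        intro a haN haT
        simp only [hN, Finset.mem_filter, Finset.mem_univ, true_and,
          SimpleGraph.deleteEdges_adj] at haN
        simp only [hT, Finset.mem_filter, Finset.mem_univ, true_and] at haT
        exact haN.2 (by simpa using haT.2)
      have hsubdeg : N ∪ T ⊆ G.neighborFinset x := by
        intro a ha
        rcases Finset.mem_union.mp ha with h | h
        · simp only [hN, Finset.mem_filter, Finset.mem_univ, true_and,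
            SimpleGraph.deleteEdges_adj] at h
          exact (SimpleGraph.mem_neighborFinset _ _ _).mpr h.1
        · simp only [hT, Finset.mem_filter, Finset.mem_univ, true_and] at h
          exact (SimpleGraph.mem_neighborFinset _ _ _).mpr h.1
      have hcards : N.card + T.card ≤ G.degree x := by
        rw [← Finset.card_union_of_disjoint hdisj, ← SimpleGraph.card_neighborFinset_eq_degree]
        exact Finset.card_le_card hsubdeg
      omega
    have hDsum : D ≤ ∑ v : {w : V | w ≠ x}, g0 v := romanDom_le _ hgRDF
    rw [hsub g0] at hDsum
    have hgsum : ∑ v ∈ Finset.univ.erase x, g0 v ≤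
        (∑ v ∈ Finset.univ.erase x, f v) + N.card := by
      have h1 : ∑ v ∈ Finset.univ.erase x, g0 v ≤
          ∑ v ∈ Finset.univ.erase x,
            (f v + if (G.deleteEdges ↑S).Adj x v then 1 else 0) := by
        apply Finset.sum_le_sum
        intro v _
        simp only [hg0]
        by_cases h : f v = 0 ∧ (G.deleteEdges ↑S).Adj x v
        · rw [if_pos h, if_pos h.2, h.1]
        · rw [if_neg h]
          exact Nat.le_add_right _ _
      rw [Finset.sum_add_distrib] at h1
      have h2 : ∑ v ∈ Finset.univ.erase x, (if (G.deleteEdges ↑S).Adj x v then 1 else 0) ≤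
          N.card := by
        rw [hN, Finset.card_filter]
        exact Finset.sum_le_sum_of_subset (Finset.erase_subset _ _)
      omega
    -- f x = 2 contributes, so ∑ f ≥ 2
    have hfx2 : (2:ℕ) ≤ ∑ v, f v := by
      calc (2:ℕ) = f x := hfx.symm
      _ ≤ ∑ v, f v := Finset.single_le_sum (fun v _ => Nat.zero_le _) (Finset.mem_univ x)
    omega
  · -- case f x ≠ 2
    have hgRDF : IsRDF (G.induce {w | w ≠ x}) (fun v => f v) := by
      constructor
      · intro v; exact hfle (v : V)
      · intro v hv
        obtain ⟨u, hu, hu2⟩ := hfdom (v : V) hv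
        have hux : u ≠ x := by rintro rfl; exact hfx hu2
        exact ⟨⟨u, hux⟩, hu.1, hu2⟩
    have hDsum : D ≤ ∑ v : {w : V | w ≠ x}, f v := romanDom_le _ hgRDF
    rw [hsub] at hDsum
    omega
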